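/- Let A be a Banach algebra whose second dual A** (with the first Arens product) has the I-w*w property: for every F in A**, the map G ↦ FG is weak*-to-weak continuous. If A** is weakly amenable, then A is weakly amenable. -/

import Mathlib

open NormedSpace ContinuousLinearMap Filter

set_option maxHeartbeats 1000000

noncomputable section

namespace NormedSpace

/-- The topological dual of a seminormed space `E` (the former Mathlib `NormedSpace.Dual`). -/
abbrev Dual (𝕜 : Type*) [NontriviallyNormedField 𝕜] (E : Type*) [SeminormedAddCommGroup E]
    [NormedSpace 𝕜 E] : Type _ :=
  E →L[𝕜] 𝕜

end NormedSpace

/-- The adjoint (dual map) of a continuous linear map: `dMap T φ = φ ∘ T`. -/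
def dMap {E F : Type*} [NormedAddCommGroup E] [NormedSpace ℝ E]
    [NormedAddCommGroup F] [NormedSpace ℝ F] (T : E →L[ℝ] F) :
    Dual ℝ F →L[ℝ] Dual ℝ E :=
  (ContinuousLinearMap.compL ℝ E F ℝ).flip T

/-- The double adjoint of a continuous linear map. -/
def ddMap {E F : Type*} [NormedAddCommGroup E] [NormedSpace ℝ E]
    [NormedAddCommGroup F] [NormedSpace ℝ F] (T : E →L[ℝ] F) :
    Dual ℝ (Dual ℝ E) →L[ℝ] Dual ℝ (Dual ℝ F) :=
  dMap (dMap T)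

/-- The (first, left) Arens extension of a bounded bilinear map `m : E × F → G` to the
biduals, via the classical three steps:
`⟨g'·e, f⟩ = ⟨g', m e f⟩`, `⟨Ψ·g', e⟩ = ⟨Ψ, g'·e⟩`, `⟨arensExt m Φ Ψ, g'⟩ = ⟨Φ, Ψ·g'⟩`. -/
def arensExt {E F G : Type*} [NormedAddCommGroup E] [NormedSpace ℝ E]
    [NormedAddCommGroup F] [NormedSpace ℝ F] [NormedAddCommGroup G] [NormedSpace ℝ G]
    (m : E →L[ℝ] F →L[ℝ] G) :
    Dual ℝ (Dual ℝ E) →L[ℝ] Dual ℝ (Dual ℝ F) →L[ℝ] Dual ℝ (Dual ℝ G) :=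
  let s1 : E →L[ℝ] (Dual ℝ G →L[ℝ] Dual ℝ F) :=
    ((ContinuousLinearMap.compL ℝ F G ℝ).flip).comp m
  let s2 : Dual ℝ G →L[ℝ] (Dual ℝ (Dual ℝ F) →L[ℝ] Dual ℝ E) :=
    ((ContinuousLinearMap.compL ℝ E (Dual ℝ F) ℝ).flip).comp s1.flip
  (((ContinuousLinearMap.compL ℝ (Dual ℝ G) (Dual ℝ E) ℝ).flip).comp s2.flip).flip

/-- The first Arens product on the bidual of a (possibly non-unital) Banach algebra:
`⟨F G, a'⟩ = ⟨F, G·a'⟩` where `⟨G·a', a⟩ = ⟨G, a'·a⟩` and `⟨a'·a, b⟩ = ⟨a', a*b⟩`. -/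
def arens1 (A : Type*) [NonUnitalNormedRing A] [NormedSpace ℝ A]
    [IsScalarTower ℝ A A] [SMulCommClass ℝ A A] :
    Dual ℝ (Dual ℝ A) →L[ℝ] Dual ℝ (Dual ℝ A) →L[ℝ] Dual ℝ (Dual ℝ A) :=
  arensExt (ContinuousLinearMap.mul ℝ A)

/-- The second Arens product on the bidual of a (possibly non-unital) Banach algebra:
`⟨F ∘ G, a'⟩ = ⟨G, a'∘F⟩` where `⟨a'∘F, a⟩ = ⟨F, a∘a'⟩` and `⟨a∘a', b⟩ = ⟨a', b*a⟩`. -/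
def arens2 (A : Type*) [NonUnitalNormedRing A] [NormedSpace ℝ A]
    [IsScalarTower ℝ A A] [SMulCommClass ℝ A A] :
    Dual ℝ (Dual ℝ A) →L[ℝ] Dual ℝ (Dual ℝ A) →L[ℝ] Dual ℝ (Dual ℝ A) :=
  (arensExt ((ContinuousLinearMap.mul ℝ A).flip)).flip

/-- `f`, a map from a dual space to a normed space, is weak-star-to-weak continuous. -/
def WstarToWeakContinuous {E F : Type*} [NormedAddCommGroup E] [NormedSpace ℝ E]
    [NormedAddCommGroup F] [NormedSpace ℝ F]
    (f : Dual ℝ E → F) : Prop :=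
  Continuous fun x : WeakDual ℝ E => toWeakSpace ℝ F (f x)
section Interp
open Topology

variable {E : Type*} [NormedAddCommGroup E] [NormedSpace ℝ E]

/-- Exact finite interpolation: any element of the bidual agrees with some element of `E`
on any finite set of functionals. -/
theorem exists_interp (F : Dual ℝ (Dual ℝ E)) (s : Finset (Dual ℝ E)) :
    ∃ x : E, ∀ φ ∈ s, φ x = F φ := by
  classical
  set T : E →ₗ[ℝ] (s → ℝ) :=
    LinearMap.pi (fun i => ((i : Dual ℝ E) : E →ₗ[ℝ] ℝ)) with hT
  by_contra h
  push_neg at h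
  have hv : (fun i : s => F i) ∉ LinearMap.range T := by
    rintro ⟨x, hx⟩
    obtain ⟨φ, hφs, hφ⟩ := h x
    exact hφ (by simpa [hT] using congrFun hx ⟨φ, hφs⟩)
  obtain ⟨f, hf0, hfbot⟩ :=
    (LinearMap.range T).exists_dual_map_eq_bot_of_notMem hv inferInstance
  set c : s → ℝ := fun i => f (fun j => if i = j then (1 : ℝ) else 0) with hc
  -- the corresponding functional on E
  set ψ : Dual ℝ E := ∑ i : s, c i • (i : Dual ℝ E) with hψ
  have hψx : ∀ x : E, ψ x = f (T x) := by
    intro x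
    rw [LinearMap.pi_apply_eq_sum_univ f (T x)]
    simp [hψ, hc, hT, ContinuousLinearMap.sum_apply, mul_comm, smul_eq_mul]
  have hψ0 : ψ = 0 := by
    ext x
    have hmem : f (T x) ∈ (LinearMap.range T).map f := ⟨T x, ⟨x, rfl⟩, rfl⟩
    rw [hfbot] at hmem
    have : f (T x) = 0 := (Submodule.mem_bot ℝ).1 hmem
    simpa [this] using hψx x
  have hFψ : F ψ = ∑ i : s, c i * F i := by
    simp [hψ, map_sum, smul_eq_mul]
  have hfv : f (fun i : s => F i) = ∑ i : s, F i * c i := by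
    rw [LinearMap.pi_apply_eq_sum_univ f]
    simp [hc, smul_eq_mul]
  apply hf0
  rw [hfv]
  have h0 : (0 : ℝ) = ∑ i : s, c i * F i := by rw [← hFψ, hψ0, map_zero]
  rw [show ∑ i : s, F i * c i = ∑ i : s, c i * F i from
    Finset.sum_congr rfl fun i _ => mul_comm _ _]
  exact h0.symm

/-- The "exact approximation" filter of `F ∈ E**` on `E`. -/
def appF (F : Dual ℝ (Dual ℝ E)) : Filter E :=
  ⨅ s : Finset (Dual ℝ E), Filter.principal {x : E | ∀ φ ∈ s, φ x = F φ}

instance appF_neBot (F : Dual ℝ (Dual ℝ E)) : (appF F).NeBot := by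
  classical
  refine Filter.iInf_neBot_of_directed ?_ ?_
  · intro s t
    refine ⟨s ∪ t, ?_, ?_⟩ <;>
      · refine Filter.principal_mono.2 fun x hx φ hφ => hx φ ?_
        simp [Finset.mem_union, hφ]
  · intro s
    obtain ⟨x, hx⟩ := exists_interp F s
    exact Filter.principal_neBot_iff.2 ⟨x, hx⟩

theorem eventually_appF (F : Dual ℝ (Dual ℝ E)) (φ : Dual ℝ E) :
    ∀ᶠ x in appF F, φ x = F φ := by
  have h : appF F ≤ Filter.principal {x : E | ∀ ψ ∈ ({φ} : Finset (Dual ℝ E)), ψ x = F ψ} :=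
    iInf_le _ ({φ} : Finset (Dual ℝ E))
  filter_upwards [h (Filter.mem_principal_self _)] with x hx
  exact hx φ (Finset.mem_singleton_self φ)

theorem tendsto_appF (F : Dual ℝ (Dual ℝ E)) :
    Filter.Tendsto (fun x : E => StrongDual.toWeakDual (inclusionInDoubleDual ℝ E x))
      (appF F) (𝓝 (StrongDual.toWeakDual F)) := by
  rw [tendsto_iff_forall_eval_tendsto_topDualPairing]
  intro y
  refine Filter.Tendsto.congr' ?_ tendsto_const_nhds
  filter_upwards [eventually_appF F y] with x hx
  exact hx.symm

theorem weakSpace_eval_continuous {G : Type*} [NormedAddCommGroup G] [NormedSpace ℝ G]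
    (ψ : Dual ℝ G) : Continuous fun x : WeakSpace ℝ G => ψ (toWeakSpace ℝ G |>.symm x) :=
  WeakBilin.eval_continuous ((topDualPairing ℝ G).flip) ψ

end Interp

open Topology

variable {A : Type*} [NonUnitalNormedRing A] [NormedSpace ℝ A]
  [IsScalarTower ℝ A A] [SMulCommClass ℝ A A] [CompleteSpace A]

variable (A) in
/-- The left action of `a ∈ A` on `a' ∈ A*`: `⟨a·a', x⟩ = ⟨a', x*a⟩`. -/
def dualActL (a : A) : Dual ℝ A →L[ℝ] Dual ℝ A :=
  dMap ((ContinuousLinearMap.mul ℝ A).flip a)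

variable (A) in
/-- The right action of `a ∈ A` on `a' ∈ A*`: `⟨a'·a, x⟩ = ⟨a', a*x⟩`. -/
def dualActR (a : A) : Dual ℝ A →L[ℝ] Dual ℝ A :=
  dMap (ContinuousLinearMap.mul ℝ A a)

variable (A) in
/-- The left action of `H ∈ A**` (first Arens product) on `Φ ∈ A***`:
`⟨H·Φ, G⟩ = ⟨Φ, G H⟩`. -/
def triActL (H : Dual ℝ (Dual ℝ A)) :
    Dual ℝ (Dual ℝ (Dual ℝ A)) →L[ℝ] Dual ℝ (Dual ℝ (Dual ℝ A)) :=
  dMap (E := Dual ℝ (Dual ℝ A)) (F := Dual ℝ (Dual ℝ A)) ((arens1 A).flip H)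

variable (A) in
/-- The right action of `H ∈ A**` (first Arens product) on `Φ ∈ A***`:
`⟨Φ·H, G⟩ = ⟨Φ, H G⟩`. -/
def triActR (H : Dual ℝ (Dual ℝ A)) :
    Dual ℝ (Dual ℝ (Dual ℝ A)) →L[ℝ] Dual ℝ (Dual ℝ (Dual ℝ A)) :=
  dMap (E := Dual ℝ (Dual ℝ A)) (F := Dual ℝ (Dual ℝ A)) (arens1 A H)

variable (A) in
/-- `rAct a' a = a' ∘ (a * ·)`, i.e. `a' · a` in the Arens construction. -/
def rAct (a' : Dual ℝ A) : A →L[ℝ] Dual ℝ A :=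
  ((ContinuousLinearMap.compL ℝ A A ℝ) a').comp (ContinuousLinearMap.mul ℝ A)

variable (A) in
/-- `Ldot G a' = G · a'` in the Arens construction: `⟨G·a', a⟩ = ⟨G, a'·a⟩`. -/
def Ldot (G : Dual ℝ (Dual ℝ A)) (a' : Dual ℝ A) : Dual ℝ A :=
  dMap (rAct A a') G

omit [CompleteSpace A] in
theorem arens1_apply' (F G : Dual ℝ (Dual ℝ A)) (a' : Dual ℝ A) :
    arens1 A F G a' = F (Ldot A G a') := rfl

/-- If `A**` (first Arens product) has the `I`-`w*w` property and `A**` is weakly amenable,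
then `A` is weakly amenable. -/
theorem weaklyAmenable_of_bidual_Iwstarw
    (hw : ∀ F : Dual ℝ (Dual ℝ A),
      WstarToWeakContinuous fun G : Dual ℝ (Dual ℝ A) => arens1 A F G)
    (hamen : ∀ 𝒟 : Dual ℝ (Dual ℝ A) →L[ℝ] Dual ℝ (Dual ℝ (Dual ℝ A)),
      (∀ F G : Dual ℝ (Dual ℝ A),
        𝒟 (arens1 A F G) = triActL A F (𝒟 G) + triActR A G (𝒟 F)) →
      ∃ Φ : Dual ℝ (Dual ℝ (Dual ℝ A)), ∀ F : Dual ℝ (Dual ℝ A),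
        𝒟 F = triActL A F Φ - triActR A F Φ)
    (D : A →L[ℝ] Dual ℝ A)
    (hD : ∀ a b : A, D (a * b) = dualActL A a (D b) + dualActR A b (D a)) :
    ∃ f : Dual ℝ A, ∀ a : A, D a = dualActL A a f - dualActR A a f := by
  classical
  set ι : A →L[ℝ] Dual ℝ (Dual ℝ A) := inclusionInDoubleDual ℝ A with hι
  -- Step A : derivation identity on ι(A) × ι(A)
  have stepA : ∀ (a b : A) (H : Dual ℝ (Dual ℝ A)),
      arens1 A (ι a) (ι b) (dMap D H)
        = (ι b) (dMap D (arens1 A H (ι a))) + (ι a) (dMap D (arens1 A (ι b) H)) := by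
    intro a b H
    have e0 : arens1 A (ι a) (ι b) (dMap D H) = H (D (a * b)) := rfl
    have e1 : (ι b) (dMap D (arens1 A H (ι a))) = H (dualActL A a (D b)) := rfl
    have e2 : (ι a) (dMap D (arens1 A (ι b) H)) = H (dualActR A b (D a)) := rfl
    rw [e0, e1, e2, hD a b, map_add]
  -- Step B : derivation identity on ι(A) × A**
  have stepB : ∀ (G H : Dual ℝ (Dual ℝ A)) (a : A),
      arens1 A (ι a) G (dMap D H)
        = G (dMap D (arens1 A H (ι a))) + (ι a) (dMap D (arens1 A G H)) := by
    intro G H a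
    have hev : ∀ᶠ b in appF G, arens1 A (ι a) G (dMap D H)
        = G (dMap D (arens1 A H (ι a))) + (ι a) (dMap D (arens1 A G H)) := by
      filter_upwards [eventually_appF G (dualActR A a (dMap D H)),
        eventually_appF G (dMap D (arens1 A H (ι a))),
        eventually_appF G (Ldot A H (D a))] with b hb1 hb2 hb3
      have eL : arens1 A (ι a) G (dMap D H) = G (dualActR A a (dMap D H)) := rfl
      have eLb : arens1 A (ι a) (ι b) (dMap D H) = dualActR A a (dMap D H) b := rfl
      have eR2 : (ι a) (dMap D (arens1 A G H)) = G (Ldot A H (D a)) := rfl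
      have eR2b : (ι a) (dMap D (arens1 A (ι b) H)) = Ldot A H (D a) b := rfl
      have eR1b : (ι b) (dMap D (arens1 A H (ι a))) = dMap D (arens1 A H (ι a)) b := rfl
      calc arens1 A (ι a) G (dMap D H) = dualActR A a (dMap D H) b := by rw [eL, ← hb1]
        _ = arens1 A (ι a) (ι b) (dMap D H) := eLb.symm
        _ = (ι b) (dMap D (arens1 A H (ι a))) + (ι a) (dMap D (arens1 A (ι b) H)) :=
            stepA a b H
        _ = G (dMap D (arens1 A H (ι a))) + (ι a) (dMap D (arens1 A G H)) := by
            rw [eR1b, hb2, eR2b, hb3, ← eR2]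
    obtain ⟨_, h⟩ := hev.exists
    exact h
  -- Step C : derivation identity on A** × A**, using the I-w*w property
  have key : ∀ F G H : Dual ℝ (Dual ℝ A),
      arens1 A F G (dMap D H)
        = G (dMap D (arens1 A H F)) + F (dMap D (arens1 A G H)) := by
    intro F G H
    have hcont : Filter.Tendsto (fun a : A => G (dMap D (arens1 A H (ι a)))) (appF F)
        (𝓝 (G (dMap D (arens1 A H F)))) := by
      have t1 := tendsto_appF F
      have t2 := ((hw H).tendsto (StrongDual.toWeakDual F)).comp t1
      have t3 := ((weakSpace_eval_continuous
        (G.comp (dMap D : Dual ℝ (Dual ℝ A) →L[ℝ] Dual ℝ A))).tendsto _).comp t2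
      exact t3
    have hB : ∀ᶠ a in appF F, G (dMap D (arens1 A H (ι a)))
        = arens1 A F G (dMap D H) - F (dMap D (arens1 A G H)) := by
      filter_upwards [eventually_appF F (Ldot A G (dMap D H)),
        eventually_appF F (dMap D (arens1 A G H))] with a ha1 ha2
      have hb := stepB G H a
      have eL : arens1 A (ι a) G (dMap D H) = Ldot A G (dMap D H) a := rfl
      have eR2 : (ι a) (dMap D (arens1 A G H)) = dMap D (arens1 A G H) a := rfl
      rw [eL, ha1, ← arens1_apply', eR2, ha2] at hb
      linarith
    have hconst : Filter.Tendsto (fun a : A => G (dMap D (arens1 A H (ι a)))) (appF F)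
        (𝓝 (arens1 A F G (dMap D H) - F (dMap D (arens1 A G H)))) :=
      Filter.Tendsto.congr' (hB.mono fun a ha => ha.symm) tendsto_const_nhds
    have := tendsto_nhds_unique hcont hconst
    linarith
  -- `ddMap D` is a derivation on A**
  have hder : ∀ F G : Dual ℝ (Dual ℝ A),
      ddMap D (arens1 A F G) = triActL A F (ddMap D G) + triActR A G (ddMap D F) := by
    intro F G
    ext H
    have e : ddMap D (arens1 A F G) H = arens1 A F G (dMap D H) := rfl
    have e1 : triActL A F (ddMap D G) H = G (dMap D (arens1 A H F)) := rfl
    have e2 : triActR A G (ddMap D F) H = F (dMap D (arens1 A G H)) := rfl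
    rw [ContinuousLinearMap.add_apply, e, e1, e2]
    exact key F G H
  obtain ⟨Φ, hΦ⟩ := hamen (ddMap D) hder
  refine ⟨dMap (E := A) (F := Dual ℝ (Dual ℝ A)) ι Φ, fun a => ?_⟩
  ext x
  have h := congrArg (fun Ψ : Dual ℝ (Dual ℝ (Dual ℝ A)) => Ψ (ι x)) (hΦ (ι a))
  simp only [ContinuousLinearMap.sub_apply] at h
  have e0 : ddMap D (ι a) (ι x) = D a x := rfl
  have e1 : triActL A (ι a) Φ (ι x) = Φ (arens1 A (ι x) (ι a)) := rfl
  have e2 : triActR A (ι a) Φ (ι x) = Φ (arens1 A (ι a) (ι x)) := rfl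
  have m1 : arens1 A (ι x) (ι a) = ι (x * a) := rfl
  have m2 : arens1 A (ι a) (ι x) = ι (a * x) := rfl
  have g1 : dualActL A a (dMap (E := A) (F := Dual ℝ (Dual ℝ A)) ι Φ) x = Φ (ι (x * a)) := rfl
  have g2 : dualActR A a (dMap (E := A) (F := Dual ℝ (Dual ℝ A)) ι Φ) x = Φ (ι (a * x)) := rfl
  rw [ContinuousLinearMap.sub_apply, g1, g2]
  rw [e0, e1, e2, m1, m2] at h
  exact h
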